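/- Let 0 ≤ λ < λ' be real numbers with J(λ) > J(λ'). Then every nonempty subset S ⊆ V that maximizes H_λ over all nonempty subsets satisfies c(S) < θ. (In particular, for any λ strictly below the least minimizer of the Lagrangian dual J, every optimal solution of the Lagrangian relaxation with parameter λ is infeasible for Q-DISCO.) -/
import Mathlib


/-- The number of edges of `G` with both endpoints in `S`, divided by `|S|`. -/
noncomputable def density {V : Type*} (G : SimpleGraph V) (S : Finset V) : ℝ :=
  ({e ∈ G.edgeSet | ∀ v ∈ e, v ∈ S} : Set (Sym2 V)).ncard / S.card

/-- The average agreement value over `S`. -/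
noncomputable def agreement {V : Type*} (c : V → ℝ) (S : Finset V) : ℝ :=
  (∑ v ∈ S, c v) / S.card

/-- The Lagrangian objective `H_λ(S) = d(S) + λ (c(S) - θ)`. -/
noncomputable def Hval {V : Type*} (G : SimpleGraph V) (c : V → ℝ) (θ l : ℝ)
    (S : Finset V) : ℝ :=
  density G S + l * (agreement c S - θ)

/-- If `0 ≤ λ < λ'` and `J(λ) > J(λ')`, then every nonempty maximizer of `H_λ` is
infeasible for Q-DISCO (its agreement is strictly below `θ`). In particular this holds for
any `λ` strictly below the least minimizer of the Lagrangian dual. -/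
theorem infeasible_below_dual_minimizer {V : Type*} [Fintype V] [Nonempty V]
    (G : SimpleGraph V) (c : V → ℝ) (θ : ℝ) (J : ℝ → ℝ)
    (hJ : ∀ l : ℝ,
      IsGreatest {x : ℝ | ∃ S : Finset V, S.Nonempty ∧ x = Hval G c θ l S} (J l))
    (l l' : ℝ) (hl : 0 ≤ l) (hll' : l < l') (hJl : J l' < J l)
    (S : Finset V) (hS : S.Nonempty)
    (hopt : ∀ T : Finset V, T.Nonempty → Hval G c θ l T ≤ Hval G c θ l S) :
    agreement c S < θ := by
  by_contra h
  push_neg at h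
  -- J l = Hval l S
  obtain ⟨⟨T, hT, hTe⟩, hub⟩ := hJ l
  have hJlS : J l ≤ Hval G c θ l S := hTe ▸ hopt T hT
  have hSJl : Hval G c θ l S ≤ J l := hub ⟨S, hS, rfl⟩
  have h1 : Hval G c θ l S ≤ Hval G c θ l' S := by
    unfold Hval
    have : l * (agreement c S - θ) ≤ l' * (agreement c S - θ) :=
      mul_le_mul_of_nonneg_right (le_of_lt hll') (by linarith)
    linarith
  have h2 : Hval G c θ l' S ≤ J l' := (hJ l').2 ⟨S, hS, rfl⟩
  linarith
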